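/- Let X be a real Banach space, U ⊆ ℝ an open neighborhood of 0, and (Z_n)_{n∈ℕ} a sequence of functions Z_n : U → X, each real analytic on U, converging pointwise on U to a function Z : U → X. Suppose there is a function K : U → ℝ, real analytic at 0, such that for every k ∈ ℕ the k-th derivative of K at 0 is nonnegative, and ‖(d^k Z_n/dλ^k)(0)‖_X ≤ (d^k K/dλ^k)(0) for all n and k. Then Z is real analytic on some neighborhood of 0, and ‖(d^k Z/dλ^k)(0)‖_X ≤ (d^k K/dλ^k)(0) for all k ∈ ℕ. -/

import Mathlib

open Filter Finset Nat
open scoped NNReal ENNReal Topology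

section aux

variable {X : Type*} [NormedAddCommGroup X] [NormedSpace ℝ X]

set_option maxHeartbeats 1000000 in
/-- Tail estimate for a power series whose coefficients are dominated by `a`. -/
lemma stmt16_tail {a : ℕ → ℝ} {ρ : ℝ} (hρ : 0 < ρ) (ha : ∀ j, 0 ≤ a j)
    (hsum : Summable fun j => a j * ρ ^ j)
    {c : ℕ → X} (hc : ∀ j, ‖c j‖ ≤ a j)
    {x : ℝ} (hx : |x| ≤ ρ) {S : X} (hS : HasSum (fun j => x ^ j • c j) S) (k : ℕ) :
    ‖S - ∑ j ∈ Finset.range k, x ^ j • c j‖ ≤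
      (∑' j, a j * ρ ^ j) / ρ ^ k * |x| ^ k := by
  have hρk : (0:ℝ) < ρ ^ k := pow_pos hρ k
  have hshift : HasSum (fun i => x ^ (i + k) • c (i + k))
      (S - ∑ j ∈ Finset.range k, x ^ j • c j) := (hasSum_nat_add_iff' (f := fun j => x ^ j • c j) k).mpr hS
  have hterm : ∀ i, ‖x ^ (i + k) • c (i + k)‖ ≤ a (i + k) * ρ ^ i * |x| ^ k := by
    intro i
    have h1 : ‖x ^ (i + k) • c (i + k)‖ = |x| ^ (i + k) * ‖c (i + k)‖ := by
      rw [norm_smul, Real.norm_eq_abs, abs_pow]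
    rw [h1, pow_add]
    have hxk : (0:ℝ) ≤ |x| ^ k := pow_nonneg (abs_nonneg x) k
    calc |x| ^ i * |x| ^ k * ‖c (i + k)‖
        ≤ ρ ^ i * |x| ^ k * a (i + k) := by
          apply mul_le_mul (mul_le_mul_of_nonneg_right
            (pow_le_pow_left₀ (abs_nonneg x) hx i) hxk) (hc _) (norm_nonneg _) (by positivity)
      _ = a (i + k) * ρ ^ i * |x| ^ k := by ring
  have h2 : Summable fun i => a (i + k) * ρ ^ (i + k) := (summable_nat_add_iff k).mpr hsum
  have heq : ∀ i, a (i + k) * ρ ^ i = a (i + k) * ρ ^ (i + k) / ρ ^ k := by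
    intro i
    rw [pow_add, mul_div_assoc, mul_div_cancel_right₀ _ (ne_of_gt hρk)]
  have hsummable : Summable fun i => a (i + k) * ρ ^ i := by
    have := h2.div_const (ρ ^ k)
    refine this.congr fun i => (heq i).symm
  have hsummable' : Summable fun i => a (i + k) * ρ ^ i * |x| ^ k := hsummable.mul_right _
  have hnorm : ‖S - ∑ j ∈ Finset.range k, x ^ j • c j‖ ≤ ∑' i, a (i + k) * ρ ^ i * |x| ^ k := by
    have hsn : Summable fun i => ‖x ^ (i + k) • c (i + k)‖ :=
      Summable.of_nonneg_of_le (fun _ => norm_nonneg _) hterm hsummable'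
    calc ‖S - ∑ j ∈ Finset.range k, x ^ j • c j‖
        = ‖∑' i, x ^ (i + k) • c (i + k)‖ := by rw [hshift.tsum_eq]
      _ ≤ ∑' i, ‖x ^ (i + k) • c (i + k)‖ := norm_tsum_le_tsum_norm hsn
      _ ≤ ∑' i, a (i + k) * ρ ^ i * |x| ^ k := Summable.tsum_le_tsum hterm hsn hsummable'
  rw [tsum_mul_right] at hnorm
  refine hnorm.trans (mul_le_mul_of_nonneg_right ?_ (pow_nonneg (abs_nonneg x) k))
  have hle : (∑' i, a (i + k) * ρ ^ (i + k)) ≤ ∑' j, a j * ρ ^ j := by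
    have hpartial : (0:ℝ) ≤ ∑ i ∈ Finset.range k, a i * ρ ^ i :=
      Finset.sum_nonneg fun i _ => mul_nonneg (ha i) (pow_nonneg hρ.le i)
    have htotal := hsum.sum_add_tsum_nat_add k
    linarith
  calc (∑' i, a (i + k) * ρ ^ i)
      = (∑' i, a (i + k) * ρ ^ (i + k)) / ρ ^ k := by
        simp_rw [heq]; exact tsum_div_const
    _ ≤ (∑' j, a j * ρ ^ j) / ρ ^ k := by
        gcongr


set_option maxHeartbeats 1000000 in
/-- Cauchy-ness of the `k`-th Taylor coefficients, given convergence of the previous ones. -/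
lemma stmt16_cauchy [CompleteSpace X] {b : ℕ → ℕ → X} {ZZ : ℕ → ℝ → X} {Zl : ℝ → X} {ρ C : ℝ}
    (hρ : 0 < ρ) (hC : 0 ≤ C)
    (hconv : ∀ x : ℝ, |x| ≤ ρ → Filter.Tendsto (fun n => ZZ n x) atTop (nhds (Zl x)))
    (htail : ∀ n k, ∀ x : ℝ, |x| ≤ ρ →
      ‖ZZ n x - ∑ j ∈ Finset.range k, x ^ j • b n j‖ ≤ C / ρ ^ k * |x| ^ k)
    {k : ℕ} {c : ℕ → X} (hc : ∀ j, j < k → Filter.Tendsto (fun n => b n j) atTop (nhds (c j))) :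
    CauchySeq fun n => b n k := by
  rw [Metric.cauchySeq_iff]
  intro ε hε
  set D : ℝ := C / ρ ^ (k + 1) with hD
  have hρk1 : (0:ℝ) < ρ ^ (k + 1) := pow_pos hρ _
  have hD0 : 0 ≤ D := div_nonneg hC hρk1.le
  set t : ℝ := min ρ (ε * ρ ^ (k + 1) / (4 * (C + 1))) with ht
  have ht0 : 0 < t := lt_min hρ (by positivity)
  have htρ : t ≤ ρ := min_le_left _ _
  have htabs : |t| ≤ ρ := by rwa [abs_of_pos ht0]
  have hDt : 2 * (D * t) ≤ ε / 2 := by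
    have h1 : t ≤ ε * ρ ^ (k + 1) / (4 * (C + 1)) := min_le_right _ _
    have h2 : D * t ≤ D * (ε * ρ ^ (k + 1) / (4 * (C + 1))) :=
      mul_le_mul_of_nonneg_left h1 hD0
    have h3 : D * (ε * ρ ^ (k + 1) / (4 * (C + 1))) = ε * C / (4 * (C + 1)) := by
      rw [hD]; field_simp
    have h4 : ε * C / (4 * (C + 1)) ≤ ε / 4 := by
      rw [div_le_div_iff₀ (by positivity) (by positivity)]
      nlinarith
    linarith
  have hWlim : Filter.Tendsto (fun n => ZZ n t - ∑ j ∈ Finset.range k, t ^ j • b n j) atTop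
      (nhds (Zl t - ∑ j ∈ Finset.range k, t ^ j • c j)) := by
    refine (hconv t htabs).sub ?_
    exact tendsto_finset_sum _ fun j hj => ((hc j (Finset.mem_range.mp hj)).const_smul _)
  have hWc : CauchySeq (fun n => ZZ n t - ∑ j ∈ Finset.range k, t ^ j • b n j) :=
    hWlim.cauchySeq
  have htk : (0:ℝ) < t ^ k := pow_pos ht0 k
  obtain ⟨N, hN⟩ := Metric.cauchySeq_iff.mp hWc (ε / 4 * t ^ k) (by positivity)
  refine ⟨N, fun m hm n hn => ?_⟩
  have key : ∀ i, ‖(ZZ i t - ∑ j ∈ Finset.range k, t ^ j • b i j) - t ^ k • b i k‖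
      ≤ D * t * t ^ k := by
    intro i
    have h5 := htail i (k + 1) t htabs
    rw [Finset.sum_range_succ] at h5
    have h6 : ZZ i t - (∑ j ∈ Finset.range k, t ^ j • b i j + t ^ k • b i k)
        = (ZZ i t - ∑ j ∈ Finset.range k, t ^ j • b i j) - t ^ k • b i k := by abel
    rw [h6] at h5
    refine h5.trans (le_of_eq ?_)
    rw [abs_of_pos ht0, hD, pow_succ]
    ring
  have hWmn := hN m hm n hn
  rw [dist_eq_norm] at hWmn ⊢
  have e1 : t ^ k • b m k - t ^ k • b n k
      = ((ZZ m t - ∑ j ∈ Finset.range k, t ^ j • b m j)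
          - (ZZ n t - ∑ j ∈ Finset.range k, t ^ j • b n j))
        - (((ZZ m t - ∑ j ∈ Finset.range k, t ^ j • b m j) - t ^ k • b m k)
           - ((ZZ n t - ∑ j ∈ Finset.range k, t ^ j • b n j) - t ^ k • b n k)) := by abel
  have e2 : t ^ k * ‖b m k - b n k‖ = ‖t ^ k • b m k - t ^ k • b n k‖ := by
    rw [← smul_sub, norm_smul, Real.norm_eq_abs, abs_of_pos htk]
  have e3 : ‖t ^ k • b m k - t ^ k • b n k‖ < ε / 4 * t ^ k + (D * t * t ^ k + D * t * t ^ k) := by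
    rw [e1]
    calc ‖_ - _‖ ≤ ‖(ZZ m t - ∑ j ∈ Finset.range k, t ^ j • b m j)
          - (ZZ n t - ∑ j ∈ Finset.range k, t ^ j • b n j)‖
        + ‖((ZZ m t - ∑ j ∈ Finset.range k, t ^ j • b m j) - t ^ k • b m k)
           - ((ZZ n t - ∑ j ∈ Finset.range k, t ^ j • b n j) - t ^ k • b n k)‖ := norm_sub_le _ _
      _ < ε / 4 * t ^ k + (D * t * t ^ k + D * t * t ^ k) := by
          have h7 := (norm_sub_le _ _).trans (add_le_add (key m) (key n))
          exact add_lt_add_of_lt_of_le hWmn h7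
  have e4 : t ^ k * ‖b m k - b n k‖ < t ^ k * ε := by
    rw [e2]
    have h8 : D * t * t ^ k + D * t * t ^ k = (2 * (D * t)) * t ^ k := by ring
    have h9 : (2 * (D * t)) * t ^ k ≤ ε / 2 * t ^ k :=
      mul_le_mul_of_nonneg_right hDt htk.le
    calc ‖t ^ k • b m k - t ^ k • b n k‖
        < ε / 4 * t ^ k + (D * t * t ^ k + D * t * t ^ k) := e3
      _ ≤ ε / 4 * t ^ k + ε / 2 * t ^ k := by rw [h8]; linarith
      _ < t ^ k * ε := by nlinarith
  exact lt_of_mul_lt_mul_left e4 htk.le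

end aux


set_option maxHeartbeats 2000000 in
/-- A pointwise limit of Banach-space-valued real analytic functions whose
Taylor coefficients at `0` are uniformly majorized by the Taylor coefficients of a function `K`
that is real analytic at `0` with nonnegative derivatives at `0`, is itself real analytic on a
neighborhood of `0`, with the same majorization of its derivatives at `0`. -/
theorem stmt_16 {X : Type*} [NormedAddCommGroup X] [NormedSpace ℝ X] [CompleteSpace X]
    (U : Set ℝ) (hU : IsOpen U) (h0 : (0 : ℝ) ∈ U)
    (Z : ℕ → ℝ → X) (hZa : ∀ n, AnalyticOnNhd ℝ (Z n) U)
    (Zlim : ℝ → X)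
    (hconv : ∀ x ∈ U, Filter.Tendsto (fun n => Z n x) Filter.atTop (nhds (Zlim x)))
    (K : ℝ → ℝ) (hK : AnalyticAt ℝ K 0)
    (hKpos : ∀ k : ℕ, 0 ≤ iteratedDeriv k K 0)
    (hmaj : ∀ (n : ℕ) (k : ℕ), ‖iteratedDeriv k (Z n) 0‖ ≤ iteratedDeriv k K 0) :
    (∃ ε > 0, AnalyticOnNhd ℝ Zlim (Metric.ball 0 ε)) ∧
    ∀ k : ℕ, ‖iteratedDeriv k Zlim 0‖ ≤ iteratedDeriv k K 0 := by
  classical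
  obtain ⟨p, rK, hKball⟩ := hK
  -- Taylor coefficients of K
  have hKcoeff : ∀ k : ℕ, iteratedDeriv k K 0 = (k ! : ℝ) * p.coeff k := by
    intro k
    rw [iteratedDeriv_eq_iteratedFDeriv, ← hKball.factorial_smul (1 : ℝ) k,
      FormalMultilinearSeries.apply_eq_pow_smul_coeff, one_pow, one_smul, nsmul_eq_mul]
  have ha0 : ∀ k, 0 ≤ p.coeff k := by
    intro k
    have h1 := hKpos k
    rw [hKcoeff k] at h1
    have hk : (0:ℝ) < (k ! : ℝ) := by positivity
    nlinarith
  -- Taylor coefficients of the `Z n`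
  have hZ0 : ∀ n, AnalyticAt ℝ (Z n) 0 := fun n => hZa n 0 h0
  choose q hq using hZ0
  set b : ℕ → ℕ → X := fun n k => (q n).coeff k with hbdef
  have hZcoeff : ∀ n k, iteratedDeriv k (Z n) 0 = (k !) • b n k := by
    intro n k
    obtain ⟨rn, hball⟩ := hq n
    rw [iteratedDeriv_eq_iteratedFDeriv, ← hball.factorial_smul (1 : ℝ) k,
      FormalMultilinearSeries.apply_eq_pow_smul_coeff, one_pow, one_smul]
  have hb : ∀ n k, ‖b n k‖ ≤ p.coeff k := by
    intro n k
    have h1 := hmaj n k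
    rw [hZcoeff n k, hKcoeff k, ← Nat.cast_smul_eq_nsmul ℝ, norm_smul, Real.norm_natCast] at h1
    have hk : (0:ℝ) < (k ! : ℝ) := by positivity
    exact le_of_mul_le_mul_left h1 hk
  -- choice of a radius
  have hrad : 0 < p.radius := lt_of_lt_of_le hKball.r_pos hKball.r_le
  obtain ⟨ε0, hε0, hball0⟩ := Metric.isOpen_iff.mp hU 0 h0
  obtain ⟨ρ', hρ'0, hρ'rad⟩ : ∃ ρ' : ℝ≥0, 0 < ρ' ∧ (ρ' : ℝ≥0∞) < p.radius := by
    rcases ENNReal.lt_iff_exists_nnreal_btwn.mp hrad with ⟨ρ', h1, h2⟩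
    exact ⟨ρ', by exact_mod_cast h1, h2⟩
  set ρ : ℝ≥0 := min ρ' (Real.toNNReal (ε0 / 2)) with hρdef
  have hρ0 : 0 < ρ := lt_min hρ'0 (Real.toNNReal_pos.mpr (by linarith))
  have hρrad : (ρ : ℝ≥0∞) < p.radius :=
    lt_of_le_of_lt (by exact_mod_cast min_le_left _ _) hρ'rad
  have hρε0 : (ρ : ℝ) < ε0 := by
    have h1 : (ρ : ℝ) ≤ ε0 / 2 := by
      have := min_le_right ρ' (Real.toNNReal (ε0 / 2))
      calc (ρ : ℝ) ≤ (Real.toNNReal (ε0 / 2) : ℝ) := by exact_mod_cast this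
        _ = ε0 / 2 := Real.coe_toNNReal _ (by linarith)
    linarith
  have hballU : Metric.ball (0:ℝ) (ρ : ℝ) ⊆ U :=
    (Metric.ball_subset_ball hρε0.le).trans hball0
  -- summability of the majorant series at radius ρ
  have hsumρ : Summable fun j => p.coeff j * (ρ : ℝ) ^ j := by
    have h1 := p.summable_norm_mul_pow hρrad
    refine h1.congr fun j => ?_
    rw [p.norm_apply_eq_norm_coef, Real.norm_eq_abs, abs_of_nonneg (ha0 j)]
  -- radius of each `q n` is at least ρ
  set T : ℝ := ∑' j, p.coeff j * (ρ : ℝ) ^ j with hTdef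
  have hterm_le : ∀ j, p.coeff j * (ρ : ℝ) ^ j ≤ T := fun j =>
    Summable.le_tsum hsumρ j fun i _ => mul_nonneg (ha0 i) (by positivity)
  have hqrad : ∀ n, (ρ : ℝ≥0∞) ≤ (q n).radius := by
    intro n
    refine (q n).le_radius_of_bound T fun j => ?_
    have h1 : ‖(q n) j‖ = ‖b n j‖ := (q n).norm_apply_eq_norm_coef
    rw [h1]
    refine le_trans ?_ (hterm_le j)
    exact mul_le_mul_of_nonneg_right (hb n j) (by positivity)
  -- each `Z n` is the sum of its Taylor series on the ball of radius ρ
  have hQsum : ∀ n, ∀ x : ℝ, |x| < (ρ : ℝ) → HasSum (fun j => x ^ j • b n j) (Z n x) := by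
    intro n x hx
    have hxball : x ∈ Metric.eball (0:ℝ) (ρ : ℝ≥0∞) := by
      rw [Metric.emetric_ball_nnreal]
      simpa [Metric.mem_ball, Real.dist_eq] using hx
    have hxrad : x ∈ Metric.eball (0:ℝ) (q n).radius := EMetric.ball_subset_ball (hqrad n) hxball
    have h1 : HasSum (fun j => (q n) j fun _ => x) ((q n).sum x) := (q n).hasSum hxrad
    have hsumAnal : AnalyticOnNhd ℝ (q n).sum (Metric.ball (0:ℝ) (ρ : ℝ)) := by
      have h2 := ((q n).hasFPowerSeriesOnBall (lt_of_lt_of_le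
        (ENNReal.coe_pos.mpr hρ0) (hqrad n))).analyticOnNhd
      refine h2.mono ?_
      rw [← Metric.emetric_ball_nnreal]
      exact EMetric.ball_subset_ball (hqrad n)
    have hev : Z n =ᶠ[nhds (0:ℝ)] (q n).sum := by
      obtain ⟨rn, hball⟩ := hq n
      filter_upwards [EMetric.ball_mem_nhds (0:ℝ) hball.r_pos] with y hy
      simpa using hball.sum hy
    have heq : Set.EqOn (Z n) (q n).sum (Metric.ball (0:ℝ) (ρ : ℝ)) := by
      refine AnalyticOnNhd.eqOn_of_preconnected_of_eventuallyEq
        ((hZa n).mono hballU) hsumAnal ?_ (Metric.mem_ball_self (by exact_mod_cast hρ0)) hev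
      exact (convex_ball (0:ℝ) (ρ : ℝ)).isPreconnected
    have hZx : Z n x = (q n).sum x := heq (by simpa [Metric.mem_ball, Real.dist_eq] using hx)
    rw [hZx]
    simp_rw [FormalMultilinearSeries.apply_eq_pow_smul_coeff] at h1
    exact h1
  -- work at radius R2 = ρ/2
  obtain ⟨R2, hR2def⟩ : ∃ R2 : ℝ, R2 = (ρ : ℝ) / 2 := ⟨_, rfl⟩
  have hR2 : 0 < R2 := by
    have : (0:ℝ) < (ρ : ℝ) := by exact_mod_cast hρ0
    rw [hR2def]; positivity
  have hR2ρ : ∀ x : ℝ, |x| ≤ R2 → |x| < (ρ : ℝ) := by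
    intro x hx
    have : (0:ℝ) < (ρ : ℝ) := by exact_mod_cast hρ0
    calc |x| ≤ R2 := hx
      _ < (ρ : ℝ) := by rw [hR2def]; linarith
  have hsum2 : Summable fun j => p.coeff j * R2 ^ j := by
    refine Summable.of_nonneg_of_le (fun j => mul_nonneg (ha0 j) (by positivity))
      (fun j => ?_) hsumρ
    refine mul_le_mul_of_nonneg_left ?_ (ha0 j)
    refine pow_le_pow_left₀ hR2.le ?_ j
    rw [hR2def]
    have : (0:ℝ) < (ρ : ℝ) := by exact_mod_cast hρ0
    linarith
  obtain ⟨T2, hT2def⟩ : ∃ T2 : ℝ, T2 = ∑' j, p.coeff j * R2 ^ j := ⟨_, rfl⟩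
  have hT2 : 0 ≤ T2 := hT2def ▸ tsum_nonneg fun j => mul_nonneg (ha0 j) (by positivity)
  have htail : ∀ n k, ∀ x : ℝ, |x| ≤ R2 →
      ‖Z n x - ∑ j ∈ Finset.range k, x ^ j • b n j‖ ≤ T2 / R2 ^ k * |x| ^ k := by
    intro n k x hx
    exact hT2def ▸ stmt16_tail hR2 ha0 hsum2 (hb n) hx (hQsum n x (hR2ρ x hx)) k
  have hconv2 : ∀ x : ℝ, |x| ≤ R2 → Filter.Tendsto (fun n => Z n x) atTop (nhds (Zlim x)) := by
    intro x hx
    refine hconv x (hballU ?_)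
    simpa [Metric.mem_ball, Real.dist_eq] using hR2ρ x hx
  -- the limit coefficients
  have QQ : ∀ k : ℕ, ∃ c : ℕ → X, ∀ j, j < k →
      Filter.Tendsto (fun n => b n j) atTop (nhds (c j)) := by
    intro k
    induction k with
    | zero => exact ⟨fun _ => 0, fun j hj => absurd hj (Nat.not_lt_zero j)⟩
    | succ k ih =>
      obtain ⟨c, hc⟩ := ih
      have hcs : CauchySeq fun n => b n k := stmt16_cauchy hR2 hT2 hconv2 htail hc
      obtain ⟨ck, hck⟩ := cauchySeq_tendsto_of_complete hcs
      refine ⟨fun j => if j = k then ck else c j, fun j hj => ?_⟩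
      rcases Nat.lt_succ_iff_lt_or_eq.mp hj with h | h
      · simpa [Nat.ne_of_lt h] using hc j h
      · simpa [h] using hck
  have hex : ∀ k : ℕ, ∃ x : X, Filter.Tendsto (fun n => b n k) atTop (nhds x) := by
    intro k
    obtain ⟨c, hc⟩ := QQ (k + 1)
    exact ⟨c k, hc k (Nat.lt_succ_self k)⟩
  choose c hc using hex
  have hcb : ∀ k, ‖c k‖ ≤ p.coeff k := fun k =>
    le_of_tendsto (hc k).norm (Filter.Eventually.of_forall fun n => hb n k)
  -- Zlim satisfies the same tail estimates
  have hZlimtail : ∀ (y : ℝ), |y| ≤ R2 → ∀ k,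
      ‖Zlim y - ∑ j ∈ Finset.range k, y ^ j • c j‖ ≤ T2 / R2 ^ k * |y| ^ k := by
    intro y hy k
    have hlim : Filter.Tendsto (fun n => ‖Z n y - ∑ j ∈ Finset.range k, y ^ j • b n j‖) atTop
        (nhds ‖Zlim y - ∑ j ∈ Finset.range k, y ^ j • c j‖) := by
      refine Filter.Tendsto.norm ?_
      exact (hconv2 y hy).sub (tendsto_finset_sum _ fun j _ => ((hc j).const_smul _))
    exact le_of_tendsto hlim (Filter.Eventually.of_forall fun n => htail n k y hy)
  -- Zlim is the sum of the limit series
  have hZlimsum : ∀ (y : ℝ), |y| < R2 → HasSum (fun j => y ^ j • c j) (Zlim y) := by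
    intro y hy
    have hyR2 : |y| ≤ R2 := hy.le
    have hsummy : Summable fun j => y ^ j • c j := by
      refine Summable.of_norm ?_
      refine Summable.of_nonneg_of_le (fun _ => norm_nonneg _) (fun j => ?_) hsum2
      rw [norm_smul, norm_pow, Real.norm_eq_abs]
      calc |y| ^ j * ‖c j‖ ≤ R2 ^ j * p.coeff j := by
            refine mul_le_mul (pow_le_pow_left₀ (abs_nonneg y) hyR2 j) (hcb j)
              (norm_nonneg _) (by positivity)
        _ = p.coeff j * R2 ^ j := by ring
    have hbound : ∀ k, ‖(∑ j ∈ Finset.range k, y ^ j • c j) - Zlim y‖ ≤ T2 * (|y| / R2) ^ k := by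
      intro k
      rw [norm_sub_rev]
      refine (hZlimtail y hyR2 k).trans (le_of_eq ?_)
      ring
    have h0 : Filter.Tendsto (fun k : ℕ => T2 * (|y| / R2) ^ k) atTop (nhds 0) := by
      have h1 : |y| / R2 < 1 := (div_lt_one hR2).mpr hy
      have h2 : (0:ℝ) ≤ |y| / R2 := by positivity
      have := tendsto_pow_atTop_nhds_zero_of_lt_one h2 h1
      simpa using this.const_mul T2
    have hpartial : Filter.Tendsto (fun k => ∑ j ∈ Finset.range k, y ^ j • c j) atTop
        (nhds (Zlim y)) := by
      rw [tendsto_iff_norm_sub_tendsto_zero]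
      exact squeeze_zero (fun k => norm_nonneg _) hbound h0
    exact (hsummy.hasSum_iff_tendsto_nat).mpr hpartial
  -- the limit power series
  set qlim : FormalMultilinearSeries ℝ ℝ X :=
    fun k => ContinuousMultilinearMap.mkPiRing ℝ (Fin k) (c k) with hqlimdef
  have hqlimcoeff : ∀ k, qlim.coeff k = c k := by
    intro k
    simp [FormalMultilinearSeries.coeff, hqlimdef, ContinuousMultilinearMap.mkPiRing_apply]
  have hqlimrad : ENNReal.ofReal R2 ≤ qlim.radius := by
    have h1 : ENNReal.ofReal R2 = ((Real.toNNReal R2 : ℝ≥0) : ℝ≥0∞) := rfl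
    rw [h1]
    refine qlim.le_radius_of_bound T2 fun j => ?_
    have h2 : ‖qlim j‖ = ‖c j‖ := ContinuousMultilinearMap.norm_mkPiRing _
    rw [h2, Real.coe_toNNReal _ hR2.le]
    refine le_trans (mul_le_mul_of_nonneg_right (hcb j) (by positivity)) ?_
    exact hT2def ▸ Summable.le_tsum hsum2 j fun i _ => mul_nonneg (ha0 i) (by positivity)
  have hZlimball : HasFPowerSeriesOnBall Zlim qlim 0 (ENNReal.ofReal R2) := by
    refine ⟨hqlimrad, ENNReal.ofReal_pos.mpr hR2, ?_⟩
    intro y hy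
    rw [zero_add]
    have hy' : |y| < R2 := by
      rw [EMetric.mem_ball, edist_zero_right, ← ofReal_norm] at hy
      rw [← Real.norm_eq_abs]
      exact (ENNReal.ofReal_lt_ofReal_iff_of_nonneg (norm_nonneg y)).mp hy
    have h1 := hZlimsum y hy'
    refine HasSum.congr_fun h1 fun k => ?_
    simp [hqlimdef, ContinuousMultilinearMap.mkPiRing_apply, Finset.prod_const]
  constructor
  · refine ⟨R2, hR2, ?_⟩
    have h1 := hZlimball.analyticOnNhd
    rwa [Metric.emetric_ball] at h1
  · intro k
    have hql : iteratedDeriv k Zlim 0 = (k !) • qlim.coeff k := by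
      rw [iteratedDeriv_eq_iteratedFDeriv, ← hZlimball.factorial_smul (1 : ℝ) k,
        FormalMultilinearSeries.apply_eq_pow_smul_coeff, one_pow, one_smul]
    rw [hql, hqlimcoeff, hKcoeff k, ← Nat.cast_smul_eq_nsmul ℝ, norm_smul, Real.norm_natCast]
    exact mul_le_mul_of_nonneg_left (hcb k) (Nat.cast_nonneg _)
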